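/- Let Λ : ℍ → ℍ be a regular ℝ-linear map with s(Λ) = 2. Then there exists ĝ ∈ 𝕊 such that for all g, h ∈ 𝕊, Λ is complex linear of type (g,h) if and only if (g,h) = (ĝ,ĝ) or (g,h) = (−ĝ,−ĝ). Moreover, for every pair e₁, e₂ ∈ 𝕊 such that e₁, e₂, ĝ are pairwise orthogonal, there exist nonzero λ₁, λ₂ ∈ ℍ with Λ = λ₁·θ̄_{e₁} + λ₂·θ̄_{e₂}. -/

import Mathlib

noncomputable section

open Quaternion Classical

/-- The imaginary unit `i`. -/
def qi : ℍ[ℝ] := ⟨0, 1, 0, 0⟩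
/-- The imaginary unit `j`. -/
def qj : ℍ[ℝ] := ⟨0, 0, 1, 0⟩
/-- The imaginary unit `k`. -/
def qk : ℍ[ℝ] := ⟨0, 0, 0, 1⟩

/-- The 2-sphere of quaternionic imaginary units. -/
def sph : Set ℍ[ℝ] := {x | x ^ 2 = -1}

/-- The real scalar product `⟨x, y⟩ = Re (x * ȳ)` on `ℍ`. -/
def qip (x y : ℍ[ℝ]) : ℝ := (x * star y).re

/-- `‖Λ‖²`, the squared norm of a real linear map `Λ : ℍ → ℍ`. -/
def normSqL (Λ : ℍ[ℝ] →ₗ[ℝ] ℍ[ℝ]) : ℝ :=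
  (1 / 4) * (normSq (Λ 1) + normSq (Λ qi) + normSq (Λ qj) + normSq (Λ qk))

/-- The bilinear expression `A_Λ(p, q) = ⟨R_p ∘ Λ, Λ ∘ L_q⟩`. -/
def Aform (Λ : ℍ[ℝ] →ₗ[ℝ] ℍ[ℝ]) (p q : ℍ[ℝ]) : ℝ :=
  (1 / 4) * (qip (Λ 1 * p) (Λ (q * 1)) + qip (Λ qi * p) (Λ (q * qi))
    + qip (Λ qj * p) (Λ (q * qj)) + qip (Λ qk * p) (Λ (q * qk)))

/-- The trace of the bilinear form `A_Λ` on `Im ℍ`. -/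
def trA (Λ : ℍ[ℝ] →ₗ[ℝ] ℍ[ℝ]) : ℝ := Aform Λ qi qi + Aform Λ qj qj + Aform Λ qk qk

/-- The bilinear form `M_Λ(p,q) = (1/2) tr(A_Λ) ⟨p,q⟩ - (1/2) A_Λ(p,q)`. -/
def Mform (Λ : ℍ[ℝ] →ₗ[ℝ] ℍ[ℝ]) (p q : ℍ[ℝ]) : ℝ :=
  (1 / 2) * trA Λ * qip p q - (1 / 2) * Aform Λ p q

/-- `Λ` is complex linear of type `(g, h)` if `Λ(g x) = Λ(x) h` for all `x`. -/
def IsCLType (Λ : ℍ[ℝ] →ₗ[ℝ] ℍ[ℝ]) (g h : ℍ[ℝ]) : Prop := ∀ x, Λ (g * x) = Λ x * h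

/-- `Λ` is regular (right Fueter-regular). -/
def IsReg (Λ : ℍ[ℝ] →ₗ[ℝ] ℍ[ℝ]) : Prop :=
  Λ 1 * 1 + Λ qi * qi + Λ qj * qj + Λ qk * qk = 0

/-- The antiautomorphism-type map `θ̄_p(x) = p x̄ p⁻¹` as a real linear map. -/
def thetaBar (p : ℍ[ℝ]) : ℍ[ℝ] →ₗ[ℝ] ℍ[ℝ] where
  toFun x := p * star x * p⁻¹
  map_add' x y := by simp [star_add, mul_add, add_mul]
  map_smul' r x := by simp [mul_smul_comm, smul_mul_assoc]

/-- Left multiplication by a quaternion, as a real linear map. -/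
def lmul (a : ℍ[ℝ]) : ℍ[ℝ] →ₗ[ℝ] ℍ[ℝ] := LinearMap.mulLeft ℝ a

/-- The size `s(Λ)` of a (regular) real linear map: the minimal number of nonzero
coefficients `λ₁, λ₂, λ₃` in a decomposition `Λ = λ₁ θ̄_{e₁} + λ₂ θ̄_{e₂} + λ₃ θ̄_{e₃}`,
over all triples of pairwise orthogonal imaginary units `e₁, e₂, e₃`. -/
def qsize (Λ : ℍ[ℝ] →ₗ[ℝ] ℍ[ℝ]) : ℕ :=
  sInf { n | ∃ e₁ e₂ e₃ l₁ l₂ l₃ : ℍ[ℝ],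
    e₁ ∈ sph ∧ e₂ ∈ sph ∧ e₃ ∈ sph ∧
    qip e₁ e₂ = 0 ∧ qip e₁ e₃ = 0 ∧ qip e₂ e₃ = 0 ∧
    Λ = (lmul l₁).comp (thetaBar e₁) + (lmul l₂).comp (thetaBar e₂)
        + (lmul l₃).comp (thetaBar e₃) ∧
    n = (if l₁ = 0 then 0 else 1) + (if l₂ = 0 then 0 else 1) + (if l₃ = 0 then 0 else 1) }

/-- The 3×3 matrix of `M_Λ` with respect to the basis `(i, j, k)` of `Im ℍ`. -/
def Mmat (Λ : ℍ[ℝ] →ₗ[ℝ] ℍ[ℝ]) : Matrix (Fin 3) (Fin 3) ℝ :=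
  Matrix.of fun α β => Mform Λ (![qi, qj, qk] α) (![qi, qj, qk] β)

/-- The basis `(1, i, j, k)` of `ℍ` over `ℝ`. -/
def qBasis : Module.Basis (Fin 4) ℝ ℍ[ℝ] := QuaternionAlgebra.basisOneIJK (-1) 0 (-1)

/-- The adjugate `Λ^adjg` of a real linear map `Λ : ℍ → ℍ`: the linear map whose matrix
with respect to the basis `(1, i, j, k)` is the adjugate of the matrix of `Λ`. -/
def adjg (Λ : ℍ[ℝ] →ₗ[ℝ] ℍ[ℝ]) : ℍ[ℝ] →ₗ[ℝ] ℍ[ℝ] :=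
  Matrix.toLin qBasis qBasis (Matrix.adjugate (LinearMap.toMatrix qBasis qBasis Λ))

/-- The embedding `ℂ → ℍ`, `x + √-1 y ↦ x + y i`. -/
def iotaC (z : ℂ) : ℍ[ℝ] := ⟨z.re, z.im, 0, 0⟩

/-- The map `L_Λ : Im ℍ → Im ℍ` representing `A_Λ`: `⟨p, L_Λ(q)⟩ = A_Λ(p, q)`. -/
def LLam (Λ : ℍ[ℝ] →ₗ[ℝ] ℍ[ℝ]) (q : ℍ[ℝ]) : ℍ[ℝ] :=
  Aform Λ qi q • qi + Aform Λ qj q • qj + Aform Λ qk q • qk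

/-- The quadratic form `Q_Λ(q) = |L_Λ(q)|²`. -/
def QLam (Λ : ℍ[ℝ] →ₗ[ℝ] ℍ[ℝ]) (q : ℍ[ℝ]) : ℝ := normSq (LLam Λ q)

lemma qip_eq (x y : ℍ[ℝ]) : qip x y = x.re*y.re + x.imI*y.imI + x.imJ*y.imJ + x.imK*y.imK := by
  simp [qip, Quaternion.re_mul]

lemma qip_comm (x y : ℍ[ℝ]) : qip x y = qip y x := by rw [qip_eq, qip_eq]; ring

lemma mem_sph (x : ℍ[ℝ]) (h : x ∈ sph) : x.re = 0 ∧ x.imI^2+x.imJ^2+x.imK^2 = 1 := by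
  have h : x*x = -1 := by rw [← sq]; exact h
  have h1 := congrArg QuaternionAlgebra.re h
  have h2 := congrArg QuaternionAlgebra.imI h
  have h3 := congrArg QuaternionAlgebra.imJ h
  have h4 := congrArg QuaternionAlgebra.imK h
  simp only [Quaternion.re_mul, Quaternion.imI_mul, Quaternion.imJ_mul, Quaternion.imK_mul,
    Quaternion.re_neg, Quaternion.imI_neg, Quaternion.imJ_neg, Quaternion.imK_neg,
    Quaternion.re_one, Quaternion.imI_one, Quaternion.imJ_one, Quaternion.imK_one] at h1 h2 h3 h4
  have hre : x.re = 0 := by nlinarith [sq_nonneg x.imI, sq_nonneg x.imJ, sq_nonneg x.imK, sq_nonneg x.re]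
  exact ⟨hre, by nlinarith⟩

lemma sph_re {x : ℍ[ℝ]} (h : x ∈ sph) : x.re = 0 := (mem_sph x h).1

lemma sph_mul_self {x : ℍ[ℝ]} (h : x ∈ sph) : x * x = -1 := by rw [← sq]; exact h

lemma sph_star {x : ℍ[ℝ]} (h : x ∈ sph) : star x = -x := by
  ext <;> simp [Quaternion.re_star, sph_re h]

lemma sph_ne_zero {x : ℍ[ℝ]} (h : x ∈ sph) : x ≠ 0 := by
  intro h0; rw [h0] at h; simp only [sph, Set.mem_setOf_eq] at h
  rw [zero_pow (by norm_num)] at h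
  exact one_ne_zero (neg_eq_zero.mp h.symm)

lemma sph_inv {x : ℍ[ℝ]} (h : x ∈ sph) : x⁻¹ = -x := by
  have : x * (-x) = 1 := by rw [mul_neg, sph_mul_self h, neg_neg]
  exact inv_eq_of_mul_eq_one_right this

lemma sph_neg {x : ℍ[ℝ]} (h : x ∈ sph) : -x ∈ sph := by
  have : (-x)^2 = x^2 := neg_sq x
  simpa only [sph, Set.mem_setOf_eq, this] using h

lemma qip_self {x : ℍ[ℝ]} (h : x ∈ sph) : qip x x = 1 := by
  obtain ⟨h1, h2⟩ := mem_sph x h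
  rw [qip_eq, h1]; nlinarith

-- anticommutation
lemma ortho_anticomm {x y : ℍ[ℝ]} (hx : x.re = 0) (hy : y.re = 0) (h : qip x y = 0) :
    x * y = -(y * x) := by
  rw [qip_eq, hx, hy] at h
  ext <;> simp [Quaternion.re_mul, Quaternion.imI_mul, Quaternion.imJ_mul, Quaternion.imK_mul, hx, hy] <;> ring_nf <;> linarith

lemma imre_mul {x y : ℍ[ℝ]} (hx : x.re = 0) (hy : y.re = 0) : (x*y).re = -(qip x y) := by
  rw [qip_eq, hx, hy]; simp [Quaternion.re_mul, hx, hy]; ring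

section Pair
variable {e₁ e₂ : ℍ[ℝ]}

lemma pair_anti (h₁ : e₁ ∈ sph) (h₂ : e₂ ∈ sph) (ho : qip e₁ e₂ = 0) : e₁ * e₂ = -(e₂ * e₁) :=
  ortho_anticomm (sph_re h₁) (sph_re h₂) ho

lemma pair_g1 (h₁ : e₁ ∈ sph) (h₂ : e₂ ∈ sph) (ho : qip e₁ e₂ = 0) : (e₁ * e₂) * e₁ = e₂ := by
  rw [pair_anti h₁ h₂ ho, neg_mul, mul_assoc, sph_mul_self h₁, mul_neg_one, neg_neg]

lemma pair_g2 (h₂ : e₂ ∈ sph) : (e₁ * e₂) * e₂ = -e₁ := by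
  rw [mul_assoc, sph_mul_self h₂, mul_neg_one]

lemma pair_1g (h₁ : e₁ ∈ sph) : e₁ * (e₁ * e₂) = -e₂ := by
  rw [← mul_assoc, sph_mul_self h₁, neg_one_mul]

lemma pair_2g (h₁ : e₁ ∈ sph) (h₂ : e₂ ∈ sph) (ho : qip e₁ e₂ = 0) : e₂ * (e₁ * e₂) = e₁ := by
  rw [pair_anti h₁ h₂ ho, mul_neg, ← mul_assoc, sph_mul_self h₂, neg_one_mul, neg_neg]

lemma pair_g_sph (h₁ : e₁ ∈ sph) (h₂ : e₂ ∈ sph) (ho : qip e₁ e₂ = 0) : e₁ * e₂ ∈ sph := by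
  show (e₁*e₂)^2 = -1
  rw [sq, ← mul_assoc, pair_g1 h₁ h₂ ho, sph_mul_self h₂]

lemma pair_qip_1g (h₁ : e₁ ∈ sph) (h₂ : e₂ ∈ sph) (ho : qip e₁ e₂ = 0) : qip e₁ (e₁ * e₂) = 0 := by
  have h := imre_mul (sph_re h₁) (sph_re (pair_g_sph h₁ h₂ ho))
  rw [pair_1g h₁, Quaternion.re_neg, sph_re h₂, neg_zero, eq_comm, neg_eq_zero] at h
  exact h

lemma pair_qip_2g (h₁ : e₁ ∈ sph) (h₂ : e₂ ∈ sph) (ho : qip e₁ e₂ = 0) : qip e₂ (e₁ * e₂) = 0 := by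
  have h := imre_mul (sph_re h₂) (sph_re (pair_g_sph h₁ h₂ ho))
  rw [pair_2g h₁ h₂ ho, sph_re h₁, eq_comm, neg_eq_zero] at h
  exact h

end Pair

lemma thetaBar_apply {e : ℍ[ℝ]} (he : e ∈ sph) (x : ℍ[ℝ]) :
    thetaBar e x = -(e * star x * e) := by
  show e * star x * e⁻¹ = _
  rw [sph_inv he, mul_neg]

lemma pair_anti' {e₁ e₂ : ℍ[ℝ]} (h₁ : e₁ ∈ sph) (h₂ : e₂ ∈ sph) (ho : qip e₁ e₂ = 0) :
    e₂ * e₁ = -(e₁ * e₂) := by rw [pair_anti h₁ h₂ ho, neg_neg]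

lemma theta_im {e : ℍ[ℝ]} (he : e ∈ sph) {G : ℍ[ℝ]} (hG : G.re = 0) :
    thetaBar e G = e * G * e := by
  rw [thetaBar_apply he]
  have : star G = -G := by ext <;> simp [hG]
  rw [this, mul_neg, neg_mul, neg_neg]

lemma sq_red {e : ℍ[ℝ]} (he : e ∈ sph) (w : ℍ[ℝ]) : e*(e*w) = -w := by
  rw [← mul_assoc, sph_mul_self he, neg_one_mul]

lemma swap_red {e₁ e₂ : ℍ[ℝ]} (h₁ : e₁ ∈ sph) (h₂ : e₂ ∈ sph) (ho : qip e₁ e₂ = 0) (w : ℍ[ℝ]) :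
    e₂*(e₁*w) = -(e₁*(e₂*w)) := by
  rw [← mul_assoc, ← mul_assoc, pair_anti' h₁ h₂ ho, neg_mul]

lemma theta_g_comm₁ {e₁ e₂ : ℍ[ℝ]} (h₁ : e₁ ∈ sph) (h₂ : e₂ ∈ sph) (ho : qip e₁ e₂ = 0) (x : ℍ[ℝ]) :
    thetaBar e₁ ((e₁*e₂) * x) = thetaBar e₁ x * (e₁*e₂) := by
  rw [thetaBar_apply h₁, thetaBar_apply h₁, star_mul, sph_star (pair_g_sph h₁ h₂ ho)]
  simp only [mul_assoc, mul_neg, neg_mul, neg_neg, sq_red h₁, sq_red h₂, swap_red h₁ h₂ ho,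
    sph_mul_self h₁, sph_mul_self h₂, pair_anti' h₁ h₂ ho, mul_one, one_mul, neg_inj]

lemma theta_g_comm₂ {e₁ e₂ : ℍ[ℝ]} (h₁ : e₁ ∈ sph) (h₂ : e₂ ∈ sph) (ho : qip e₁ e₂ = 0) (x : ℍ[ℝ]) :
    thetaBar e₂ ((e₁*e₂) * x) = thetaBar e₂ x * (e₁*e₂) := by
  rw [thetaBar_apply h₂, thetaBar_apply h₂, star_mul, sph_star (pair_g_sph h₁ h₂ ho)]
  simp only [mul_assoc, mul_neg, neg_mul, neg_neg, sq_red h₁, sq_red h₂, swap_red h₁ h₂ ho,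
    sph_mul_self h₁, sph_mul_self h₂, pair_anti' h₁ h₂ ho, mul_one, one_mul, neg_inj]

lemma theta_theta {e₁ e₂ : ℍ[ℝ]} (h₁ : e₁ ∈ sph) (h₂ : e₂ ∈ sph) (ho : qip e₁ e₂ = 0) (z : ℍ[ℝ]) :
    thetaBar e₂ (thetaBar e₁ z) = -((e₁*e₂) * z * (e₁*e₂)) := by
  rw [thetaBar_apply h₁, thetaBar_apply h₂, star_neg, star_mul, star_mul, star_star,
    sph_star h₁]
  simp only [mul_assoc, mul_neg, neg_mul, neg_neg, sq_red h₁, sq_red h₂, swap_red h₁ h₂ ho,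
    sph_mul_self h₁, sph_mul_self h₂, pair_anti' h₁ h₂ ho, mul_one, one_mul, neg_inj]

lemma theta_theta_self {e : ℍ[ℝ]} (he : e ∈ sph) (z : ℍ[ℝ]) :
    thetaBar e (thetaBar e z) = z := by
  rw [thetaBar_apply he, thetaBar_apply he, star_neg, star_mul, star_mul, star_star,
    sph_star he]
  simp only [mul_assoc, mul_neg, neg_mul, neg_neg, neg_inj, mul_one, one_mul,
    sq_red he, sph_mul_self he]

lemma theta_one {e : ℍ[ℝ]} (he : e ∈ sph) : thetaBar e 1 = 1 := by
  rw [thetaBar_apply he]; simp [sph_mul_self he]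

lemma rows_to_cols (a1 a2 a3 b1 b2 b3 c1 c2 c3 : ℝ)
    (n1 : a1*a1+a2*a2+a3*a3 = 1) (n2 : b1*b1+b2*b2+b3*b3 = 1) (n3 : c1*c1+c2*c2+c3*c3 = 1)
    (d12 : a1*b1+a2*b2+a3*b3 = 0) (d13 : a1*c1+a2*c2+a3*c3 = 0) (d23 : b1*c1+b2*c2+b3*c3 = 0) :
    (a1*a1+b1*b1+c1*c1 = 1) ∧ (a2*a2+b2*b2+c2*c2 = 1) ∧ (a3*a3+b3*b3+c3*c3 = 1) ∧
    (a1*a2+b1*b2+c1*c2 = 0) ∧ (a1*a3+b1*b3+c1*c3 = 0) ∧ (a2*a3+b2*b3+c2*c3 = 0) := by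
  have hAB : (!![a1,a2,a3;b1,b2,b3;c1,c2,c3] : Matrix (Fin 3) (Fin 3) ℝ)
      * !![a1,b1,c1;a2,b2,c2;a3,b3,c3] = 1 := by
    ext i j
    fin_cases i <;> fin_cases j <;>
      simp [Matrix.mul_apply, Fin.sum_univ_three, Matrix.one_apply] <;> linarith
  have hBA := mul_eq_one_comm.mp hAB
  refine ⟨?_,?_,?_,?_,?_,?_⟩
  · have := congrFun (congrFun hBA 0) 0
    simpa [Matrix.mul_apply, Fin.sum_univ_three, Matrix.one_apply] using this
  · have := congrFun (congrFun hBA 1) 1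
    simpa [Matrix.mul_apply, Fin.sum_univ_three, Matrix.one_apply] using this
  · have := congrFun (congrFun hBA 2) 2
    simpa [Matrix.mul_apply, Fin.sum_univ_three, Matrix.one_apply] using this
  · have := congrFun (congrFun hBA 0) 1
    simpa [Matrix.mul_apply, Fin.sum_univ_three, Matrix.one_apply] using this
  · have := congrFun (congrFun hBA 0) 2
    simpa [Matrix.mul_apply, Fin.sum_univ_three, Matrix.one_apply] using this
  · have := congrFun (congrFun hBA 1) 2
    simpa [Matrix.mul_apply, Fin.sum_univ_three, Matrix.one_apply] using this

lemma expand_ortho {e₁ e₂ : ℍ[ℝ]} (h₁ : e₁ ∈ sph) (h₂ : e₂ ∈ sph) (ho : qip e₁ e₂ = 0) (x : ℍ[ℝ]) :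
    x = x.re • 1 + qip x e₁ • e₁ + qip x e₂ • e₂ + qip x (e₁*e₂) • (e₁*e₂) := by
  have hg_sph := pair_g_sph h₁ h₂ ho
  have r1 := sph_re h₁; have r2 := sph_re h₂; have r3 := sph_re hg_sph
  have n1 : e₁.imI*e₁.imI + e₁.imJ*e₁.imJ + e₁.imK*e₁.imK = 1 := by
    have := (mem_sph _ h₁).2; nlinarith
  have n2 : e₂.imI*e₂.imI + e₂.imJ*e₂.imJ + e₂.imK*e₂.imK = 1 := by
    have := (mem_sph _ h₂).2; nlinarith
  have n3 : (e₁*e₂).imI*(e₁*e₂).imI + (e₁*e₂).imJ*(e₁*e₂).imJ + (e₁*e₂).imK*(e₁*e₂).imK = 1 := by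
    have := (mem_sph _ hg_sph).2; nlinarith
  have d12 : e₁.imI*e₂.imI + e₁.imJ*e₂.imJ + e₁.imK*e₂.imK = 0 := by
    have := ho; rw [qip_eq, r1, r2] at this; linarith
  have d13 : e₁.imI*(e₁*e₂).imI + e₁.imJ*(e₁*e₂).imJ + e₁.imK*(e₁*e₂).imK = 0 := by
    have := pair_qip_1g h₁ h₂ ho; rw [qip_eq, r1, r3] at this; linarith
  have d23 : e₂.imI*(e₁*e₂).imI + e₂.imJ*(e₁*e₂).imJ + e₂.imK*(e₁*e₂).imK = 0 := by
    have := pair_qip_2g h₁ h₂ ho; rw [qip_eq, r2, r3] at this; linarith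
  obtain ⟨c1, c2, c3, c4, c5, c6⟩ := rows_to_cols _ _ _ _ _ _ _ _ _ n1 n2 n3 d12 d13 d23
  ext
  · simp [qip_eq, r1, r2, r3, Quaternion.re_smul]
  · simp only [Quaternion.imI_add, Quaternion.imI_smul, Quaternion.imI_one, qip_eq, r1, r2, r3,
      Quaternion.re_smul, Quaternion.re_add, Quaternion.re_one, mul_zero, mul_one, zero_add, add_zero, smul_eq_mul]
    linear_combination -x.imI * c1 - x.imJ * c4 - x.imK * c5
  · simp only [Quaternion.imJ_add, Quaternion.imJ_smul, Quaternion.imJ_one, qip_eq, r1, r2, r3,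
      Quaternion.re_smul, Quaternion.re_add, Quaternion.re_one, mul_zero, mul_one, zero_add, add_zero, smul_eq_mul]
    linear_combination -x.imI * c4 - x.imJ * c2 - x.imK * c6
  · simp only [Quaternion.imK_add, Quaternion.imK_smul, Quaternion.imK_one, qip_eq, r1, r2, r3,
      Quaternion.re_smul, Quaternion.re_add, Quaternion.re_one, mul_zero, mul_one, zero_add, add_zero, smul_eq_mul]
    linear_combination -x.imI * c5 - x.imJ * c6 - x.imK * c3

lemma conj_expand {E₁ E₂ : ℍ[ℝ]} (h₁ : E₁ ∈ sph) (h₂ : E₂ ∈ sph) (ho : qip E₁ E₂ = 0)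
    (α β : ℝ) (y : ℍ[ℝ]) :
    (α•E₁+β•E₂) * y * (α•E₁+β•E₂)
      = ((α^2)•(1:ℍ[ℝ]) + (α*β)•(E₁*E₂)) * (E₁*y*E₁)
        + ((β^2)•(1:ℍ[ℝ]) - (α*β)•(E₁*E₂)) * (E₂*y*E₂) := by
  have k1 : E₁*(E₂*(E₁*(y*E₁))) = E₂*(y*E₁) := by
    rw [← mul_assoc, ← mul_assoc, pair_g1 h₁ h₂ ho]
  have k2 : E₁*(E₂*(E₂*(y*E₂))) = -(E₁*(y*E₂)) := by
    rw [← mul_assoc, ← mul_assoc, mul_assoc E₁ E₂ E₂, sph_mul_self h₂, mul_neg_one, neg_mul]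
  simp only [add_mul, mul_add, sub_mul, smul_mul_assoc, mul_smul_comm, smul_smul, one_mul,
    mul_assoc, k1, k2, smul_neg]
  module

lemma qip_smul_left (r : ℝ) (x y : ℍ[ℝ]) : qip (r•x) y = r * qip x y := by
  simp [qip_eq]; ring
lemma qip_smul_right (r : ℝ) (x y : ℍ[ℝ]) : qip x (r•y) = r * qip x y := by
  simp [qip_eq]; ring
lemma qip_add_left (x x' y : ℍ[ℝ]) : qip (x+x') y = qip x y + qip x' y := by
  simp [qip_eq]; ring
lemma qip_add_right (x y y' : ℍ[ℝ]) : qip x (y+y') = qip x y + qip x y' := by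
  simp [qip_eq]; ring

lemma qip_neg_left (x y : ℍ[ℝ]) : qip (-x) y = -qip x y := by
  simp [qip_eq]; ring
lemma qip_sub_left (x x' y : ℍ[ℝ]) : qip (x-x') y = qip x y - qip x' y := by
  simp [qip_eq]; ring

lemma qip_combo {e₁ e₂ : ℍ[ℝ]} (h₁ : e₁ ∈ sph) (h₂ : e₂ ∈ sph) (ho : qip e₁ e₂ = 0)
    (α β γ δ : ℝ) : qip (α•e₁+β•e₂) (γ•e₁+δ•e₂) = α*γ+β*δ := by
  simp [qip_add_left, qip_add_right, qip_smul_left, qip_smul_right,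
    qip_self h₁, qip_self h₂, ho, qip_comm e₂ e₁]
  ring

lemma qip_combo_g {e₁ e₂ : ℍ[ℝ]} (h₁ : e₁ ∈ sph) (h₂ : e₂ ∈ sph) (ho : qip e₁ e₂ = 0)
    (α β : ℝ) : qip (α•e₁+β•e₂) (e₁*e₂) = 0 := by
  simp [qip_add_left, qip_smul_left, pair_qip_1g h₁ h₂ ho, pair_qip_2g h₁ h₂ ho]

lemma combo_mul {e₁ e₂ : ℍ[ℝ]} (h₁ : e₁ ∈ sph) (h₂ : e₂ ∈ sph) (ho : qip e₁ e₂ = 0)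
    (α β γ δ : ℝ) :
    (α•e₁+β•e₂) * (γ•e₁+δ•e₂) = (-(α*γ+β*δ))•(1:ℍ[ℝ]) + (α*δ-β*γ)•(e₁*e₂) := by
  simp only [add_mul, mul_add, smul_mul_assoc, mul_smul_comm, smul_smul,
    sph_mul_self h₁, sph_mul_self h₂, pair_anti' h₁ h₂ ho, smul_neg]
  module

lemma combo_sph {e₁ e₂ : ℍ[ℝ]} (h₁ : e₁ ∈ sph) (h₂ : e₂ ∈ sph) (ho : qip e₁ e₂ = 0)
    (α β : ℝ) (hn : α^2+β^2 = 1) : α•e₁+β•e₂ ∈ sph := by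
  show (α•e₁+β•e₂)^2 = -1
  rw [sq, combo_mul h₁ h₂ ho]
  have h1 : α*α+β*β = 1 := by nlinarith
  rw [show α*β-β*α = 0 by ring, h1, zero_smul, add_zero]
  simp

lemma central_real {m : ℍ[ℝ]} (h : ∀ z : ℍ[ℝ], z * m = m * z) : m = m.re • 1 := by
  have hi := h qi
  have hj := h qj
  have hi2 := congrArg QuaternionAlgebra.imJ hi
  have hi3 := congrArg QuaternionAlgebra.imK hi
  have hj1 := congrArg QuaternionAlgebra.imI hj
  have hj3 := congrArg QuaternionAlgebra.imK hj
  simp only [Quaternion.imI_mul, Quaternion.imJ_mul, Quaternion.imK_mul] at hi2 hi3 hj1 hj3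
  simp only [qi, qj] at hi2 hi3 hj1 hj3
  ext <;> simp [Quaternion.re_smul] <;> linarith

lemma commute_pm {e₁ e₂ G : ℍ[ℝ]} (h₁ : e₁ ∈ sph) (h₂ : e₂ ∈ sph) (ho : qip e₁ e₂ = 0)
    (hG : G ∈ sph) (hc : (e₁*e₂) * G = G * (e₁*e₂)) : G = e₁*e₂ ∨ G = -(e₁*e₂) := by
  set g := e₁*e₂ with hg
  have hgs := pair_g_sph h₁ h₂ ho
  have hexp := expand_ortho h₁ h₂ ho G
  rw [sph_re hG, zero_smul, zero_add] at hexp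
  set u := qip G e₁; set v := qip G e₂; set t := qip G g
  -- compute g*G and G*g
  have e1 : g * G = u•e₂ - v•e₁ + t•(-1) := by
    rw [hexp]
    simp only [mul_add, mul_smul_comm, ← hg]
    rw [show g*e₁ = e₂ from pair_g1 h₁ h₂ ho, show g*e₂ = -e₁ from pair_g2 h₂,
      show g*g = -1 from sph_mul_self hgs]
    module
  have e2 : G * g = -(u•e₂) + v•e₁ + t•(-1) := by
    rw [hexp]
    simp only [add_mul, smul_mul_assoc, ← hg]
    rw [show e₁*g = -e₂ from pair_1g h₁, show e₂*g = e₁ from pair_2g h₁ h₂ ho,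
      show g*g = -1 from sph_mul_self hgs]
    module
  rw [e1, e2] at hc
  have h' : u•e₂ - v•e₁ = -(u•e₂) + v•e₁ := add_right_cancel hc
  have hu : u = 0 := by
    have := congrArg (fun w => qip w e₂) h'
    simp only [qip_sub_left, qip_add_left, qip_neg_left, qip_smul_left,
      qip_self h₂, ho] at this
    linarith
  have hv : v = 0 := by
    have := congrArg (fun w => qip w e₁) h'
    simp only [qip_sub_left, qip_add_left, qip_neg_left, qip_smul_left,
      qip_self h₁, qip_comm e₂ e₁, ho] at this
    linarith
  rw [hu, hv, zero_smul, zero_smul, zero_add, zero_add] at hexp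
  have ht : t * t = 1 := by
    have hGG := sph_mul_self hG
    rw [hexp] at hGG
    have h2 : (t•(e₁*e₂)) * (t•(e₁*e₂)) = (t*t)•((e₁*e₂)*(e₁*e₂)) := by
      rw [smul_mul_assoc, mul_smul_comm, smul_smul]
    rw [h2, sph_mul_self hgs] at hGG
    have := congrArg QuaternionAlgebra.re hGG
    simp at this
    nlinarith
  rcases mul_self_eq_one_iff.mp ht with h | h
  · left; rw [hexp, h, one_smul]
  · right; rw [hexp, h, neg_one_smul]

lemma theta_antimul {e : ℍ[ℝ]} (he : e ∈ sph) (a b : ℍ[ℝ]) :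
    thetaBar e (a*b) = thetaBar e b * thetaBar e a := by
  rw [thetaBar_apply he, thetaBar_apply he, thetaBar_apply he, star_mul]
  simp only [mul_assoc, mul_neg, neg_mul, neg_neg, sq_red he, mul_one, one_mul]

lemma lmul_zero : lmul (0:ℍ[ℝ]) = 0 :=
  LinearMap.mulLeft_zero_eq_zero ℝ ℍ[ℝ]

lemma qsize_le_one {Λ : ℍ[ℝ] →ₗ[ℝ] ℍ[ℝ]} {p q r μ : ℍ[ℝ]}
    (hp : p ∈ sph) (hq : q ∈ sph) (hr : r ∈ sph)
    (hpq : qip p q = 0) (hpr : qip p r = 0) (hqr : qip q r = 0)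
    (h : Λ = (lmul μ).comp (thetaBar p)) : qsize Λ ≤ 1 := by
  have hmem : (if μ = (0:ℍ[ℝ]) then 0 else 1) ∈ { n | ∃ e₁ e₂ e₃ l₁ l₂ l₃ : ℍ[ℝ],
      e₁ ∈ sph ∧ e₂ ∈ sph ∧ e₃ ∈ sph ∧
      qip e₁ e₂ = 0 ∧ qip e₁ e₃ = 0 ∧ qip e₂ e₃ = 0 ∧
      Λ = (lmul l₁).comp (thetaBar e₁) + (lmul l₂).comp (thetaBar e₂)
          + (lmul l₃).comp (thetaBar e₃) ∧
      n = (if l₁ = 0 then 0 else 1) + (if l₂ = 0 then 0 else 1) + (if l₃ = 0 then 0 else 1) } := by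
    refine ⟨p, q, r, μ, 0, 0, hp, hq, hr, hpq, hpr, hqr, ?_, by simp⟩
    rw [h, lmul_zero]
    simp
  have := Nat.sInf_le hmem
  refine le_trans this ?_
  split <;> simp

set_option maxHeartbeats 1000000 in
lemma main_lemma (Λ : ℍ[ℝ] →ₗ[ℝ] ℍ[ℝ]) (hs : qsize Λ = 2)
    {e₁ e₂ l₁ l₂ : ℍ[ℝ]} (h₁ : e₁ ∈ sph) (h₂ : e₂ ∈ sph) (ho : qip e₁ e₂ = 0)
    (hl₁ : l₁ ≠ 0) (hl₂ : l₂ ≠ 0)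
    (hΛ : Λ = (lmul l₁).comp (thetaBar e₁) + (lmul l₂).comp (thetaBar e₂)) :
    ∃ gh ∈ sph,
      (∀ g ∈ sph, ∀ h ∈ sph,
        (IsCLType Λ g h ↔ (g = gh ∧ h = gh) ∨ (g = -gh ∧ h = -gh))) ∧
      ∀ E₁ ∈ sph, ∀ E₂ ∈ sph, qip E₁ E₂ = 0 → qip E₁ gh = 0 → qip E₂ gh = 0 →
        ∃ L₁ L₂ : ℍ[ℝ], L₁ ≠ 0 ∧ L₂ ≠ 0 ∧
          Λ = (lmul L₁).comp (thetaBar E₁) + (lmul L₂).comp (thetaBar E₂) := by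
  have hg : e₁*e₂ ∈ sph := pair_g_sph h₁ h₂ ho
  have hap : ∀ x, Λ x = l₁ * thetaBar e₁ x + l₂ * thetaBar e₂ x := by
    intro x; rw [hΛ]; simp [lmul]
  have hCLg : IsCLType Λ (e₁*e₂) (e₁*e₂) := by
    intro x
    rw [hap, hap, theta_g_comm₁ h₁ h₂ ho, theta_g_comm₂ h₁ h₂ ho, add_mul,
      mul_assoc, mul_assoc]
  have hCLneg : IsCLType Λ (-(e₁*e₂)) (-(e₁*e₂)) := by
    intro x
    rw [neg_mul, map_neg, hCLg x, mul_neg]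
  refine ⟨e₁*e₂, hg, ?_, ?_⟩
  · -- the iff
    intro G hG H hH
    constructor
    · -- forward
      intro hCL
      set A := thetaBar e₁ G - H with hA
      set B := (e₁*e₂) * (thetaBar e₂ G - H) with hB
      have hkey : ∀ z, l₁ * (z * A) = l₂ * ((e₁*e₂) * (z * B)) := by
        intro z
        have h0 := hCL (thetaBar e₁ z)
        rw [hap, hap] at h0
        have hexp : l₁ * (z * A) - l₂ * ((e₁*e₂) * (z * B))
            = (l₁ * (thetaBar e₁ (G * thetaBar e₁ z)) + l₂ * (thetaBar e₂ (G * thetaBar e₁ z)))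
              - (l₁ * thetaBar e₁ (thetaBar e₁ z) + l₂ * thetaBar e₂ (thetaBar e₁ z)) * H := by
          rw [theta_antimul h₁, theta_antimul h₂, theta_theta_self h₁, theta_theta h₁ h₂ ho,
            hA, hB]
          noncomm_ring
        rw [h0, sub_self] at hexp
        exact sub_eq_zero.mp hexp
      by_cases hBz : B = 0
      · -- B = 0 case
        have hA0 : A = 0 := by
          have := hkey 1
          rw [hBz, mul_zero, mul_zero, mul_zero, one_mul] at this
          exact (mul_eq_zero.mp this).resolve_left hl₁
        have hH1 : thetaBar e₁ G = H := by
          have h' : thetaBar e₁ G - H = 0 := by rw [← hA]; exact hA0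
          exact sub_eq_zero.mp h' 
        have hH2 : thetaBar e₂ G = H := by
          rw [hB] at hBz
          rcases mul_eq_zero.mp hBz with h | h
          · exact absurd h (sph_ne_zero hg)
          · exact sub_eq_zero.mp h
        have h12 : -((e₁*e₂) * G * (e₁*e₂)) = G := by
          rw [← theta_theta h₁ h₂ ho, hH1, ← hH2, theta_theta_self h₂]
        have hcomm : (e₁*e₂) * G = G * (e₁*e₂) := by
          have h13 : (-(e₁*e₂ * G * (e₁*e₂))) * (e₁*e₂) = G * (e₁*e₂) := by rw [h12]
          rw [neg_mul, mul_assoc (e₁*e₂*G) (e₁*e₂) (e₁*e₂), sph_mul_self hg,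
            mul_neg_one, neg_neg] at h13
          exact h13
        have hth1g : thetaBar e₁ (e₁*e₂) = e₁*e₂ := by
          rw [theta_im h₁ (sph_re hg), mul_assoc, pair_g1 h₁ h₂ ho]
        rcases commute_pm h₁ h₂ ho hG hcomm with hGg | hGg
        · left
          refine ⟨hGg, ?_⟩
          rw [← hH1, hGg, hth1g]
        · right
          refine ⟨hGg, ?_⟩
          rw [← hH1, hGg, map_neg, hth1g]
      · -- B ≠ 0 : contradiction via size 1
        exfalso
        have h1 : l₁ * A = l₂ * ((e₁*e₂) * B) := by
          have := hkey 1; rwa [one_mul, one_mul] at this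
        have hAv : A = l₁⁻¹ * (l₂ * ((e₁*e₂) * B)) := by
          rw [← h1, ← mul_assoc, inv_mul_cancel₀ hl₁, one_mul]
        have hcancel : ∀ z : ℍ[ℝ], l₁ * z * l₁⁻¹ * (l₂ * (e₁*e₂)) = (l₂ * (e₁*e₂)) * z := by
          intro z
          have hz := hkey z
          rw [hAv] at hz
          have hz' : (l₁ * z * l₁⁻¹ * (l₂ * (e₁*e₂))) * B = ((l₂ * (e₁*e₂)) * z) * B := by
            calc (l₁ * z * l₁⁻¹ * (l₂ * (e₁*e₂))) * B
                = l₁ * (z * (l₁⁻¹ * (l₂ * ((e₁*e₂) * B)))) := by noncomm_ring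
              _ = l₂ * ((e₁*e₂) * (z * B)) := hz
              _ = ((l₂ * (e₁*e₂)) * z) * B := by noncomm_ring
          exact mul_right_cancel₀ hBz hz'
        set m := l₁⁻¹ * (l₂ * (e₁*e₂)) with hm
        have hcomm : ∀ z : ℍ[ℝ], z * m = m * z := by
          intro z
          have e1 : l₁ * (z * m) = l₁ * z * l₁⁻¹ * (l₂ * (e₁*e₂)) := by
            rw [hm]; noncomm_ring
          have e0 : ∀ a : ℍ[ℝ], a = l₁⁻¹ * (l₁ * a) := fun a => by
            rw [← mul_assoc, inv_mul_cancel₀ hl₁, one_mul]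
          calc z * m = l₁⁻¹ * (l₁ * (z * m)) := e0 (z*m)
            _ = l₁⁻¹ * (l₂ * (e₁*e₂) * z) := by rw [e1, hcancel z]
            _ = m * z := by rw [hm]; noncomm_ring
        have hmne : m ≠ 0 := by
          rw [hm]
          exact mul_ne_zero (inv_ne_zero hl₁) (mul_ne_zero hl₂ (sph_ne_zero hg))
        have hmre := central_real hcomm
        set c := m.re with hc
        have hcne : c ≠ 0 := by
          intro h0
          rw [h0, zero_smul] at hmre
          exact hmne hmre
        have hlg : l₂ * (e₁*e₂) = c • l₁ := by
          have : l₁ * m = l₂ * (e₁*e₂) := by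
            rw [hm, ← mul_assoc, mul_inv_cancel₀ hl₁, one_mul]
          rw [← this, hmre, mul_smul_comm, mul_one]
        have hl₂eq : l₂ = (-c) • (l₁ * (e₁*e₂)) := by
          have h2 : l₂ * ((e₁*e₂)*(e₁*e₂)) = (c•l₁) * (e₁*e₂) := by
            rw [← mul_assoc, hlg]
          rw [sph_mul_self hg, mul_neg_one, smul_mul_assoc] at h2
          have h3 : l₂ = -(c • (l₁*(e₁*e₂))) := by rw [← h2, neg_neg]
          rw [h3, ← neg_smul]
        -- construct a size ≤ 1 decomposition
        set s : ℝ := Real.sqrt (1+c^2) with hsdef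
        have hs2 : s^2 = 1+c^2 := Real.sq_sqrt (by positivity)
        have hsne : s ≠ 0 := by positivity
        set α : ℝ := s⁻¹ with hα
        set β : ℝ := c * s⁻¹ with hβ
        have hαne : α ≠ 0 := inv_ne_zero hsne
        have hn : α^2 + β^2 = 1 := by
          rw [hα, hβ]
          field_simp
          linarith [hs2]
        have hp : α•e₁+β•e₂ ∈ sph := combo_sph h₁ h₂ ho α β hn
        have hn' : (-β)^2 + α^2 = 1 := by rw [neg_sq]; linarith
        have hq : (-β)•e₁+α•e₂ ∈ sph := combo_sph h₁ h₂ ho (-β) α hn' 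
        set w : ℍ[ℝ] := α•(1:ℍ[ℝ]) + β•(e₁*e₂) with hw
        have hwne : w ≠ 0 := by
          intro h0
          have := congrArg QuaternionAlgebra.re h0
          rw [hw] at this
          simp [Quaternion.re_smul, sph_re hg] at this
          exact hαne this
        set μ : ℍ[ℝ] := α⁻¹ • (l₁ * w⁻¹) with hμ
        have hdecomp : Λ = (lmul μ).comp (thetaBar (α•e₁+β•e₂)) := by
          refine LinearMap.ext fun x => ?_
          simp only [LinearMap.comp_apply, lmul, LinearMap.mulLeft_apply]
          rw [hap]
          have hth : thetaBar (α•e₁+β•e₂) x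
              = ((α^2)•(1:ℍ[ℝ]) + (α*β)•(e₁*e₂)) * thetaBar e₁ x
                + ((β^2)•(1:ℍ[ℝ]) - (α*β)•(e₁*e₂)) * thetaBar e₂ x := by
            rw [thetaBar_apply hp, thetaBar_apply h₁, thetaBar_apply h₂,
              conj_expand h₁ h₂ ho α β (star x), mul_neg, mul_neg, neg_add]
          rw [hth]
          have hC1 : μ * ((α^2)•(1:ℍ[ℝ]) + (α*β)•(e₁*e₂)) = l₁ := by
            have : (α^2)•(1:ℍ[ℝ]) + (α*β)•(e₁*e₂) = α • w := by
              rw [hw]; module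
            rw [this, hμ, smul_mul_assoc, mul_smul_comm, smul_smul,
              inv_mul_cancel₀ hαne, one_smul, mul_assoc, inv_mul_cancel₀ hwne, mul_one]
          have hC2 : μ * ((β^2)•(1:ℍ[ℝ]) - (α*β)•(e₁*e₂)) = l₂ := by
            have hfac : (β^2)•(1:ℍ[ℝ]) - (α*β)•(e₁*e₂) = w * ((-β)•(e₁*e₂)) := by
              rw [hw, add_mul, smul_mul_assoc, smul_mul_assoc, mul_smul_comm, mul_smul_comm,
                one_mul, sph_mul_self hg]
              module
            rw [hfac, hμ, smul_mul_assoc, mul_assoc, ← mul_assoc w⁻¹ w _,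
              inv_mul_cancel₀ hwne, one_mul, mul_smul_comm, smul_smul, hl₂eq]
            congr 1
            rw [hα, hβ]
            field_simp
          rw [mul_add,
            ← mul_assoc μ ((α^2)•(1:ℍ[ℝ]) + (α*β)•(e₁*e₂)) ((thetaBar e₁) x),
            ← mul_assoc μ ((β^2)•(1:ℍ[ℝ]) - (α*β)•(e₁*e₂)) ((thetaBar e₂) x),
            hC1, hC2]
        have hle := qsize_le_one hp hq hg
          (by rw [qip_combo h₁ h₂ ho]; ring)
          (qip_combo_g h₁ h₂ ho α β)
          (qip_combo_g h₁ h₂ ho (-β) α) hdecomp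
        omega
    · rintro (⟨rfl, rfl⟩ | ⟨rfl, rfl⟩)
      · exact hCLg
      · exact hCLneg
  · -- part 2
    intro E₁ hE₁s E₂ hE₂s hEE hE₁g hE₂g
    set α := qip E₁ e₁ with hαd
    set β := qip E₁ e₂ with hβd
    set γ := qip E₂ e₁ with hγd
    set δ := qip E₂ e₂ with hδd
    have hE₁ : E₁ = α•e₁+β•e₂ := by
      have := expand_ortho h₁ h₂ ho E₁
      rw [sph_re hE₁s, hE₁g, zero_smul, zero_smul, zero_add, add_zero] at this
      exact this
    have hE₂ : E₂ = γ•e₁+δ•e₂ := by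
      have := expand_ortho h₁ h₂ ho E₂
      rw [sph_re hE₂s, hE₂g, zero_smul, zero_smul, zero_add, add_zero] at this
      exact this
    have horth : α*γ+β*δ = 0 := by
      have := hEE
      rw [hE₁, hE₂, qip_combo h₁ h₂ ho] at this
      exact this
    have hG' : E₁*E₂ = (α*δ-β*γ)•(e₁*e₂) := by
      rw [hE₁, hE₂, combo_mul h₁ h₂ ho, horth, neg_zero, zero_smul, zero_add]
    have hq1 : qip e₁ (E₁*E₂) = 0 := by
      rw [hG', qip_smul_right, pair_qip_1g h₁ h₂ ho, mul_zero]
    have hq2 : qip e₂ (E₁*E₂) = 0 := by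
      rw [hG', qip_smul_right, pair_qip_2g h₁ h₂ ho, mul_zero]
    have he₁E : e₁ = α•E₁+γ•E₂ := by
      have := expand_ortho hE₁s hE₂s hEE e₁
      rw [sph_re h₁, hq1, zero_smul, zero_smul, zero_add, add_zero,
        qip_comm e₁ E₁, qip_comm e₁ E₂, ← hαd, ← hγd] at this
      exact this
    have he₂E : e₂ = β•E₁+δ•E₂ := by
      have := expand_ortho hE₁s hE₂s hEE e₂
      rw [sph_re h₂, hq2, zero_smul, zero_smul, zero_add, add_zero,
        qip_comm e₂ E₁, qip_comm e₂ E₂, ← hβd, ← hδd] at this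
      exact this
    set L₁ : ℍ[ℝ] := l₁*((α^2)•(1:ℍ[ℝ])+(α*γ)•(E₁*E₂)) + l₂*((β^2)•(1:ℍ[ℝ])+(β*δ)•(E₁*E₂)) with hL₁
    set L₂ : ℍ[ℝ] := l₁*((γ^2)•(1:ℍ[ℝ])-(α*γ)•(E₁*E₂)) + l₂*((δ^2)•(1:ℍ[ℝ])-(β*δ)•(E₁*E₂)) with hL₂
    have k₁ : ∀ x : ℍ[ℝ], thetaBar e₁ x
        = ((α^2)•(1:ℍ[ℝ])+(α*γ)•(E₁*E₂)) * thetaBar E₁ x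
          + ((γ^2)•(1:ℍ[ℝ])-(α*γ)•(E₁*E₂)) * thetaBar E₂ x := by
      intro x
      rw [thetaBar_apply h₁, thetaBar_apply hE₁s, thetaBar_apply hE₂s]
      conv_lhs => rw [he₁E]
      rw [conj_expand hE₁s hE₂s hEE α γ (star x), mul_neg, mul_neg, neg_add]
    have k₂ : ∀ x : ℍ[ℝ], thetaBar e₂ x
        = ((β^2)•(1:ℍ[ℝ])+(β*δ)•(E₁*E₂)) * thetaBar E₁ x
          + ((δ^2)•(1:ℍ[ℝ])-(β*δ)•(E₁*E₂)) * thetaBar E₂ x := by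
      intro x
      rw [thetaBar_apply h₂, thetaBar_apply hE₁s, thetaBar_apply hE₂s]
      conv_lhs => rw [he₂E]
      rw [conj_expand hE₁s hE₂s hEE β δ (star x), mul_neg, mul_neg, neg_add]
    have hdec : Λ = (lmul L₁).comp (thetaBar E₁) + (lmul L₂).comp (thetaBar E₂) := by
      refine LinearMap.ext fun x => ?_
      have hx : Λ x = L₁ * thetaBar E₁ x + L₂ * thetaBar E₂ x := by
        rw [hap, k₁ x, k₂ x, hL₁, hL₂]
        noncomm_ring
      simpa only [LinearMap.add_apply, LinearMap.comp_apply, lmul,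
        LinearMap.mulLeft_apply] using hx
    refine ⟨L₁, L₂, ?_, ?_, hdec⟩
    · intro h0
      rw [h0, lmul_zero, LinearMap.zero_comp, zero_add] at hdec
      have hle := qsize_le_one hE₂s hE₁s (pair_g_sph hE₁s hE₂s hEE)
        (by rw [qip_comm]; exact hEE) (pair_qip_2g hE₁s hE₂s hEE) (pair_qip_1g hE₁s hE₂s hEE) hdec
      omega
    · intro h0
      rw [h0, lmul_zero, LinearMap.zero_comp, add_zero] at hdec
      have hle := qsize_le_one hE₁s hE₂s (pair_g_sph hE₁s hE₂s hEE)
        hEE (pair_qip_1g hE₁s hE₂s hEE) (pair_qip_2g hE₁s hE₂s hEE) hdec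
      omega


/-- A regular real linear map `Λ` of size `2`: there exists `ĝ ∈ 𝕊` such that `Λ` is
complex linear of type `(g,h)` iff `(g,h) = (ĝ,ĝ)` or `(g,h) = (−ĝ,−ĝ)`; moreover for any
`e₁, e₂ ∈ 𝕊` with `e₁, e₂, ĝ` pairwise orthogonal, `Λ = λ₁ θ̄_{e₁} + λ₂ θ̄_{e₂}` for some
nonzero `λ₁, λ₂`. -/
theorem stmt10 (Λ : ℍ[ℝ] →ₗ[ℝ] ℍ[ℝ]) (hreg : IsReg Λ) (hs : qsize Λ = 2) :
    ∃ gh ∈ sph,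
      (∀ g ∈ sph, ∀ h ∈ sph,
        (IsCLType Λ g h ↔ (g = gh ∧ h = gh) ∨ (g = -gh ∧ h = -gh))) ∧
      ∀ e₁ ∈ sph, ∀ e₂ ∈ sph, qip e₁ e₂ = 0 → qip e₁ gh = 0 → qip e₂ gh = 0 →
        ∃ l₁ l₂ : ℍ[ℝ], l₁ ≠ 0 ∧ l₂ ≠ 0 ∧
          Λ = (lmul l₁).comp (thetaBar e₁) + (lmul l₂).comp (thetaBar e₂) := by
  clear hreg
  have hmem : (2:ℕ) ∈ { n | ∃ e₁ e₂ e₃ l₁ l₂ l₃ : ℍ[ℝ],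
      e₁ ∈ sph ∧ e₂ ∈ sph ∧ e₃ ∈ sph ∧
      qip e₁ e₂ = 0 ∧ qip e₁ e₃ = 0 ∧ qip e₂ e₃ = 0 ∧
      Λ = (lmul l₁).comp (thetaBar e₁) + (lmul l₂).comp (thetaBar e₂)
          + (lmul l₃).comp (thetaBar e₃) ∧
      n = (if l₁ = 0 then 0 else 1) + (if l₂ = 0 then 0 else 1) + (if l₃ = 0 then 0 else 1) } := by
    rw [← hs]
    apply Nat.sInf_mem
    by_contra hne
    rw [Set.not_nonempty_iff_eq_empty] at hne
    rw [qsize, hne, Nat.sInf_empty] at hs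
    exact absurd hs (by norm_num)
  obtain ⟨f₁, f₂, f₃, m₁, m₂, m₃, hf₁, hf₂, hf₃, h12, h13, h23, hdec, hn⟩ := hmem
  by_cases z1 : m₁ = 0
  · by_cases z2 : m₂ = 0
    · simp [z1, z2] at hn
      split at hn <;> omega
    · by_cases z3 : m₃ = 0
      · simp [z1, z2, z3] at hn
      · -- m₂, m₃ nonzero
        rw [z1, lmul_zero, LinearMap.zero_comp, zero_add] at hdec
        exact main_lemma Λ hs hf₂ hf₃ h23 z2 z3 hdec
  · by_cases z2 : m₂ = 0
    · by_cases z3 : m₃ = 0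
      · simp [z1, z2, z3] at hn
      · rw [z2, lmul_zero, LinearMap.zero_comp, add_zero] at hdec
        exact main_lemma Λ hs hf₁ hf₃ h13 z1 z3 hdec
    · by_cases z3 : m₃ = 0
      · rw [z3, lmul_zero, LinearMap.zero_comp, add_zero] at hdec
        exact main_lemma Λ hs hf₁ hf₂ h12 z1 z2 hdec
      · simp [z1, z2, z3] at hn

end
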